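/- Let Ω be a finite set, φ: Ω → ℝ be λ-Lipschitz with respect to a metric d on Ω (i.e., |φ(x) − φ(y)| ≤ λ d(x,y)), let x* maximize φ, and let B = {x ∈ Ω : d(x, x*) ≤ δ}. Then for the Gibbs distribution π^β with β > 0: E_{π^β}[φ] ≥ φ(x*) − δλ + (1/β) log(|B| / |Ω|). -/

import Mathlib

open Finset Real

/-- Gibbs expectation lower bound via a ball around the maximizer, for Lipschitz φ. -/
theorem stmt_4 {Ω : Type*} [Fintype Ω] [Nonempty Ω] [MetricSpace Ω]
    (φ : Ω → ℝ) (lam : ℝ) (hlam : 0 ≤ lam)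
    (hlip : ∀ x y, |φ x - φ y| ≤ lam * dist x y)
    (xs : Ω) (hxs : ∀ x, φ x ≤ φ xs)
    (δ : ℝ) (hδ : 0 < δ) (β : ℝ) (hβ : 0 < β) :
    ∑ x, φ x * (Real.exp (β * φ x) / ∑ y, Real.exp (β * φ y)) ≥
      φ xs - δ * lam + (1 / β) *
        Real.log ((Nat.card {x : Ω // dist x xs ≤ δ} : ℝ) / (Fintype.card Ω : ℝ)) := by
  classical
  have hn0 : (0:ℝ) < (Fintype.card Ω : ℝ) := by
    exact_mod_cast Fintype.card_pos
  set n : ℝ := (Fintype.card Ω : ℝ) with hn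
  set Z : ℝ := ∑ y, Real.exp (β * φ y) with hZ
  have hZ0 : 0 < Z := Finset.sum_pos (fun _ _ => Real.exp_pos _) Finset.univ_nonempty
  -- Jensen: Z * log (Z/n) ≤ ∑ a log a
  have jensen : Z * (Real.log Z - Real.log n) ≤ ∑ x, Real.exp (β * φ x) * (β * φ x) := by
    have hconv := Real.convexOn_mul_log
    have h := hconv.map_sum_le (t := (Finset.univ : Finset Ω)) (w := fun _ => 1/n)
      (p := fun x => Real.exp (β * φ x))
      (fun _ _ => by positivity)
      (by
        rw [Finset.sum_const, nsmul_eq_mul]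
        field_simp
        simp [Finset.card_univ, hn])
      (fun _ _ => le_of_lt (Real.exp_pos _))
    simp only [smul_eq_mul] at h
    have hsum : ∑ x : Ω, (1/n) * Real.exp (β * φ x) = Z / n := by
      rw [← Finset.mul_sum]; ring
    rw [hsum] at h
    have hlog : Real.log (Z / n) = Real.log Z - Real.log n :=
      Real.log_div (ne_of_gt hZ0) (ne_of_gt hn0)
    rw [hlog] at h
    have h2 : ∑ x : Ω, (1/n) * (Real.exp (β * φ x) * Real.log (Real.exp (β * φ x)))
        = (1/n) * ∑ x, Real.exp (β * φ x) * (β * φ x) := by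
      rw [Finset.mul_sum]
      refine Finset.sum_congr rfl fun x _ => ?_
      rw [Real.log_exp]
    rw [h2] at h
    have := mul_le_mul_of_nonneg_left h (le_of_lt hn0)
    calc Z * (Real.log Z - Real.log n)
        = n * (Z / n * (Real.log Z - Real.log n)) := by field_simp
      _ ≤ n * ((1/n) * ∑ x, Real.exp (β * φ x) * (β * φ x)) := this
      _ = ∑ x, Real.exp (β * φ x) * (β * φ x) := by field_simp
  -- rewrite expectation
  have hE : ∑ x, φ x * (Real.exp (β * φ x) / Z)
      = (1/(β*Z)) * ∑ x, Real.exp (β * φ x) * (β * φ x) := by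
    rw [Finset.mul_sum]
    refine Finset.sum_congr rfl fun x _ => ?_
    field_simp
  -- lower bound on Z via ball B
  set B : Finset Ω := Finset.univ.filter (fun x => dist x xs ≤ δ) with hB
  have hxsB : xs ∈ B := by
    simp [hB, hδ.le]
  have hBcard : 0 < (B.card : ℝ) := by
    exact_mod_cast Finset.card_pos.mpr ⟨xs, hxsB⟩
  have hφB : ∀ x ∈ B, φ xs - δ * lam ≤ φ x := by
    intro x hx
    rw [hB, Finset.mem_filter] at hx
    have h1 : |φ x - φ xs| ≤ lam * dist x xs := hlip x xs
    have h2 : lam * dist x xs ≤ lam * δ := mul_le_mul_of_nonneg_left hx.2 hlam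
    have := abs_le.mp (h1.trans h2)
    linarith [this.1]
  have hZB : (B.card : ℝ) * Real.exp (β * (φ xs - δ * lam)) ≤ Z := by
    calc (B.card : ℝ) * Real.exp (β * (φ xs - δ * lam))
        = ∑ _x ∈ B, Real.exp (β * (φ xs - δ * lam)) := by
          rw [Finset.sum_const, nsmul_eq_mul]
      _ ≤ ∑ x ∈ B, Real.exp (β * φ x) := by
          refine Finset.sum_le_sum fun x hx => ?_
          exact Real.exp_le_exp.mpr (mul_le_mul_of_nonneg_left (hφB x hx) hβ.le)
      _ ≤ Z := Finset.sum_le_sum_of_subset_of_nonneg (Finset.subset_univ B)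
          (fun x _ _ => (Real.exp_pos _).le)
  have hlogZ : Real.log (B.card : ℝ) + β * (φ xs - δ * lam) ≤ Real.log Z := by
    have := Real.log_le_log (by positivity) hZB
    rwa [Real.log_mul (ne_of_gt hBcard) (ne_of_gt (Real.exp_pos _)), Real.log_exp] at this
  -- card identification
  have hcard : (Nat.card {x : Ω // dist x xs ≤ δ} : ℝ) = (B.card : ℝ) := by
    rw [Nat.card_eq_fintype_card, Fintype.card_subtype]
  -- put together
  rw [hE, hcard]
  have hmain : (1/(β*Z)) * ∑ x, Real.exp (β * φ x) * (β * φ x)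
      ≥ (1/β) * (Real.log Z - Real.log n) := by
    have h1 : (1/(β*Z)) * (Z * (Real.log Z - Real.log n))
        = (1/β) * (Real.log Z - Real.log n) := by
      field_simp
    calc (1/(β*Z)) * ∑ x, Real.exp (β * φ x) * (β * φ x)
        ≥ (1/(β*Z)) * (Z * (Real.log Z - Real.log n)) :=
          mul_le_mul_of_nonneg_left jensen (by positivity)
      _ = (1/β) * (Real.log Z - Real.log n) := h1
  refine le_trans ?_ hmain
  rw [Real.log_div (ne_of_gt hBcard) (ne_of_gt hn0)]
  have hβinv : 0 < 1/β := by positivity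
  have : Real.log (B.card : ℝ) + β * (φ xs - δ * lam) ≤ Real.log Z := hlogZ
  have h4 := mul_le_mul_of_nonneg_left this hβinv.le
  have hβne : β ≠ 0 := ne_of_gt hβ
  have : (1/β) * (β * (φ xs - δ * lam)) = φ xs - δ * lam := by field_simp
  nlinarith [h4, this]
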